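/- Let g : ℝᵐ → ℝ ∪ {+∞} be convex and lower semicontinuous, let F : ℝⁿ → ℝᵐ have continuously differentiable components, let x̄ ∈ ℝⁿ satisfy F(x̄) ∈ int(dom g), let Υ > 0, κ_G > 0, Δ̄ > 0, and for each Δ ∈ (0, Δ̄) let F̃_Δ : ℝⁿ → ℝᵐ have C¹ components with F̃_Δ(x̄) = F(x̄) and ‖∇F_i(y) − ∇F̃_{i,Δ}(y)‖ ≤ κ_G Δ^Υ for all i and all y ∈ B_Δ(x̄). Let M = sup{‖w‖ : w ∈ ∂g(F(x̄))} (finite since F(x̄) ∈ int(dom g)). Then for every Δ ∈ (0, Δ̄) and every v ∈ ∇F(x̄)ᵀ ∂g(F(x̄)) there exists ṽ ∈ ∇F̃_Δ(x̄)ᵀ ∂g(F(x̄)) with ‖v − ṽ‖ ≤ M √m κ_G Δ^Υ. -/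

import Mathlib

open Metric Set

/-- The (convex) subdifferential of an extended-real-valued function `g` at `z̄`:
`∂g(z̄) = {w : g(z) ≥ g(z̄) + ⟨w, z − z̄⟩ for all z}`. -/
def ERealSubdiff13 {m : ℕ} (g : EuclideanSpace ℝ (Fin m) → EReal)
    (zbar : EuclideanSpace ℝ (Fin m)) : Set (EuclideanSpace ℝ (Fin m)) :=
  {w | ∀ z, g zbar + ((inner ℝ w (z - zbar) : ℝ) : EReal) ≤ g z}



lemma subdiff_bounded {m : ℕ} (g : EuclideanSpace ℝ (Fin m) → EReal)
    (hgbot : ∀ z, g z ≠ ⊥)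
    (hconv : Convex ℝ {p : EuclideanSpace ℝ (Fin m) × ℝ | g p.1 ≤ (p.2 : EReal)})
    (zbar : EuclideanSpace ℝ (Fin m)) (hdom : zbar ∈ interior {z | g z < ⊤}) :
    ∃ C : ℝ, ∀ w ∈ ERealSubdiff13 g zbar, ‖w‖ ≤ C := by
  classical
  set dom : Set (EuclideanSpace ℝ (Fin m)) := {z | g z < ⊤} with hdomdef
  have hdomconv : Convex ℝ dom := by
    have himg : dom = (Prod.fst : EuclideanSpace ℝ (Fin m) × ℝ → _) ''
        {p : EuclideanSpace ℝ (Fin m) × ℝ | g p.1 ≤ (p.2 : EReal)} := by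
      ext z
      constructor
      · intro hz
        exact ⟨(z, (g z).toReal), le_of_eq (EReal.coe_toReal hz.ne (hgbot z)).symm, rfl⟩
      · rintro ⟨⟨z', t⟩, hp, rfl⟩
        exact lt_of_le_of_lt hp (EReal.coe_lt_top t)
    rw [himg]
    simpa using hconv.linear_image (LinearMap.fst ℝ _ ℝ)
  set f : EuclideanSpace ℝ (Fin m) → ℝ := fun z => (g z).toReal with hfdef
  have hgeq : ∀ z ∈ dom, ((f z : ℝ) : EReal) = g z := fun z hz =>
    EReal.coe_toReal hz.ne (hgbot z)
  have hfcv : ConvexOn ℝ (interior dom) f := by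
    refine ⟨hdomconv.interior, ?_⟩
    intro x hx y hy a b ha hb hab
    have hx' : x ∈ dom := interior_subset hx
    have hy' : y ∈ dom := interior_subset hy
    have hxE : (x, f x) ∈ {p : EuclideanSpace ℝ (Fin m) × ℝ | g p.1 ≤ (p.2 : EReal)} :=
      le_of_eq (hgeq x hx').symm
    have hyE : (y, f y) ∈ {p : EuclideanSpace ℝ (Fin m) × ℝ | g p.1 ≤ (p.2 : EReal)} :=
      le_of_eq (hgeq y hy').symm
    have hmix := hconv hxE hyE ha hb hab
    simp only [Prod.smul_mk, Prod.mk_add_mk, smul_eq_mul, mem_setOf_eq] at hmix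
    have := EReal.toReal_le_toReal hmix (hgbot _) (EReal.coe_ne_top _)
    exact this.trans_eq (EReal.toReal_coe _)
  have hcont : ContinuousOn f (interior dom) :=
    hfcv.continuousOn isOpen_interior
  have hca : ContinuousAt f zbar :=
    hcont.continuousAt (isOpen_interior.mem_nhds hdom)
  obtain ⟨δ, hδpos, hδ⟩ := Metric.continuousAt_iff.1 hca 1 one_pos
  obtain ⟨r1, hr1pos, hr1⟩ := Metric.isOpen_iff.1 isOpen_interior zbar hdom
  set r : ℝ := min δ r1 with hrdef
  have hrpos : 0 < r := lt_min hδpos hr1pos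
  refine ⟨2 / r, ?_⟩
  intro w hw
  rcases eq_or_ne w 0 with rfl | hw0
  · simp; positivity
  have hwn : 0 < ‖w‖ := norm_pos_iff.2 hw0
  set z : EuclideanSpace ℝ (Fin m) := zbar + ((r/2) * ‖w‖⁻¹) • w with hzdef
  have hzsub : z - zbar = ((r/2) * ‖w‖⁻¹) • w := by simp [hzdef]
  have hznorm : ‖z - zbar‖ = r / 2 := by
    rw [hzsub, norm_smul, Real.norm_eq_abs, abs_of_pos (by positivity)]
    field_simp
  have hzball : z ∈ ball zbar r := by
    rw [mem_ball, dist_eq_norm, hznorm]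
    linarith
  have hzint : z ∈ interior dom := hr1 (ball_subset_ball (min_le_right δ r1) hzball)
  have hzdom : z ∈ dom := interior_subset hzint
  have hinner : (inner ℝ w (z - zbar) : ℝ) = (r/2) * ‖w‖ := by
    rw [hzsub, real_inner_smul_right, real_inner_self_eq_norm_sq]
    field_simp
  have hkey := hw z
  rw [hinner, ← hgeq z hzdom, ← hgeq zbar (interior_subset hdom)] at hkey
  have hkey' : f zbar + (r/2) * ‖w‖ ≤ f z := by
    have := hkey
    rw [← EReal.coe_add] at this
    exact_mod_cast this
  have hfz : |f z - f zbar| < 1 := by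
    have := hδ (show dist z zbar < δ by
      rw [dist_eq_norm, hznorm]; calc r / 2 < r := by linarith
                                    _ ≤ δ := min_le_left δ r1)
    rwa [Real.dist_eq] at this
  have h1 : (r/2) * ‖w‖ ≤ 1 := by
    have := abs_lt.1 hfz
    linarith [hkey']
  rw [div_mul_eq_mul_div, le_div_iff₀ hrpos] at *
  nlinarith


lemma l1_le_sqrt_l2 {m : ℕ} (w : EuclideanSpace ℝ (Fin m)) :
    ∑ i, |w i| ≤ Real.sqrt m * ‖w‖ := by
  classical
  set u : EuclideanSpace ℝ (Fin m) := WithLp.toLp 2 (fun _ => 1) with hu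
  set v : EuclideanSpace ℝ (Fin m) := WithLp.toLp 2 (fun i => |w i|) with hv
  have h1 : (inner ℝ u v : ℝ) = ∑ i, |w i| := by
    simp [PiLp.inner_apply, hu, hv]
  have h2 : ‖u‖ = Real.sqrt m := by
    rw [EuclideanSpace.norm_eq]
    simp [hu]
  have h3 : ‖v‖ = ‖w‖ := by
    rw [EuclideanSpace.norm_eq, EuclideanSpace.norm_eq]
    congr 1
    refine Finset.sum_congr rfl fun i _ => ?_
    simp [hv, abs_abs]
  calc ∑ i, |w i| = (inner ℝ u v : ℝ) := h1.symm
    _ ≤ ‖u‖ * ‖v‖ := real_inner_le_norm u v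
    _ = Real.sqrt m * ‖w‖ := by rw [h2, h3]

/-- Extension of the subdifferential approximation theorem (forward direction) to models with
gradient error of order `Δ^Υ` (e.g. fully quadratic models, `Υ = 2`): for every
`v ∈ ∇F(x̄)ᵀ ∂g(F(x̄))` there exists `ṽ ∈ ∇F̃_Δ(x̄)ᵀ ∂g(F(x̄))` with
`‖v − ṽ‖ ≤ M √m κG Δ^Υ`. -/
theorem subdifferential_approximation_order_fwd {n m : ℕ}
    (g : EuclideanSpace ℝ (Fin m) → EReal)
    (hgbot : ∀ z, g z ≠ ⊥)
    (hconv : Convex ℝ {p : EuclideanSpace ℝ (Fin m) × ℝ | g p.1 ≤ (p.2 : EReal)})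
    (hlsc : IsClosed {p : EuclideanSpace ℝ (Fin m) × ℝ | g p.1 ≤ (p.2 : EReal)})
    (F : Fin m → EuclideanSpace ℝ (Fin n) → ℝ)
    (hF : ∀ i, ContDiff ℝ 1 (F i))
    (xbar : EuclideanSpace ℝ (Fin n))
    (hdom : (WithLp.toLp 2 (fun i => F i xbar) : EuclideanSpace ℝ (Fin m)) ∈ interior {z | g z < ⊤})
    (Υ κG Δbar : ℝ) (hΥ : 0 < Υ) (hκG : 0 < κG) (hΔbar : 0 < Δbar)
    (Ft : ℝ → Fin m → EuclideanSpace ℝ (Fin n) → ℝ)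
    (hFtC1 : ∀ Δ ∈ Ioo (0:ℝ) Δbar, ∀ i, ContDiff ℝ 1 (Ft Δ i))
    (hcenter : ∀ Δ ∈ Ioo (0:ℝ) Δbar, ∀ i, Ft Δ i xbar = F i xbar)
    (hgrad : ∀ Δ ∈ Ioo (0:ℝ) Δbar, ∀ i, ∀ y ∈ ball xbar Δ,
      ‖gradient (F i) y - gradient (Ft Δ i) y‖ ≤ κG * Δ ^ Υ)
    (M : ℝ)
    (hM : M = sSup ((fun w => ‖w‖) ''
      ERealSubdiff13 g (WithLp.toLp 2 (fun i => F i xbar) : EuclideanSpace ℝ (Fin m)))) :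
    ∀ Δ ∈ Ioo (0:ℝ) Δbar,
      ∀ v ∈ (fun w : EuclideanSpace ℝ (Fin m) => ∑ i, w i • gradient (F i) xbar) ''
        ERealSubdiff13 g (WithLp.toLp 2 (fun i => F i xbar) : EuclideanSpace ℝ (Fin m)),
      ∃ vt ∈ (fun w : EuclideanSpace ℝ (Fin m) => ∑ i, w i • gradient (Ft Δ i) xbar) ''
        ERealSubdiff13 g (WithLp.toLp 2 (fun i => F i xbar) : EuclideanSpace ℝ (Fin m)),
      ‖v - vt‖ ≤ M * Real.sqrt m * κG * Δ ^ Υ := by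
  intro Δ hΔ v hv
  obtain ⟨w, hw, rfl⟩ := hv
  refine ⟨∑ i, w i • gradient (Ft Δ i) xbar, ⟨w, hw, rfl⟩, ?_⟩
  have hpow : (0:ℝ) ≤ Δ ^ Υ := Real.rpow_nonneg hΔ.1.le Υ
  have hXnn : (0:ℝ) ≤ κG * Δ ^ Υ := by positivity
  obtain ⟨C, hC⟩ := subdiff_bounded g hgbot hconv _ hdom
  have hwM : ‖w‖ ≤ M := by
    rw [hM]
    exact le_csSup ⟨C, by rintro x ⟨u, hu, rfl⟩; exact hC u hu⟩ ⟨w, hw, rfl⟩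
  have hsum : (∑ i, w i • gradient (F i) xbar) - ∑ i, w i • gradient (Ft Δ i) xbar
      = ∑ i, w i • (gradient (F i) xbar - gradient (Ft Δ i) xbar) := by
    rw [← Finset.sum_sub_distrib]
    exact Finset.sum_congr rfl fun i _ => (smul_sub _ _ _).symm
  have hterm : ∀ i, ‖w i • (gradient (F i) xbar - gradient (Ft Δ i) xbar)‖
      ≤ |w i| * (κG * Δ ^ Υ) := by
    intro i
    rw [norm_smul, Real.norm_eq_abs]
    exact mul_le_mul_of_nonneg_left
      (hgrad Δ hΔ i xbar (mem_ball_self hΔ.1)) (abs_nonneg _)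
  calc ‖(∑ i, w i • gradient (F i) xbar) - ∑ i, w i • gradient (Ft Δ i) xbar‖
      = ‖∑ i, w i • (gradient (F i) xbar - gradient (Ft Δ i) xbar)‖ := by rw [hsum]
    _ ≤ ∑ i, ‖w i • (gradient (F i) xbar - gradient (Ft Δ i) xbar)‖ :=
        norm_sum_le _ _
    _ ≤ ∑ i, |w i| * (κG * Δ ^ Υ) := Finset.sum_le_sum fun i _ => hterm i
    _ = (∑ i, |w i|) * (κG * Δ ^ Υ) := by rw [Finset.sum_mul]
    _ ≤ (Real.sqrt m * ‖w‖) * (κG * Δ ^ Υ) :=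
        mul_le_mul_of_nonneg_right (l1_le_sqrt_l2 w) hXnn
    _ ≤ (Real.sqrt m * M) * (κG * Δ ^ Υ) :=
        mul_le_mul_of_nonneg_right
          (mul_le_mul_of_nonneg_left hwM (Real.sqrt_nonneg _)) hXnn
    _ = M * Real.sqrt m * κG * Δ ^ Υ := by ring
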